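/- For all natural numbers n ≥ 4, E(n) ≤ E(4), where E(n) = (Σ_{ℓ even, 0 ≤ ℓ ≤ n} C_{n-ℓ}C_ℓ) / C_{n+1}. -/

import Mathlib

/-- The even part of the Catalan convolution of total index n, as a fraction of the
full convolution (which equals C_{n+1}). -/
noncomputable def catalanEvenPart (n : ℕ) : ℚ :=
  (∑ ℓ ∈ (Finset.range (n + 1)).filter (fun ℓ => Even ℓ),
      ((catalan (n - ℓ) : ℚ) * (catalan ℓ : ℚ))) / (catalan (n + 1) : ℚ)

open Finset PowerSeries

lemma catalan_succ_range (n : ℕ) :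
    catalan (n+1) = ∑ i ∈ Finset.range (n+1), catalan i * catalan (n - i) := by
  rw [catalan_succ, Finset.sum_range]

lemma sum_range_even_odd (f : ℕ → ℚ) (m : ℕ) :
    ∑ i ∈ range (2*m), f i
      = ∑ j ∈ range m, f (2*j) + ∑ j ∈ range m, f (2*j+1) := by
  induction m with
  | zero => simp
  | succ m ih =>
      rw [show 2*(m+1) = 2*m+1+1 by ring, sum_range_succ, sum_range_succ,
        sum_range_succ, sum_range_succ, ih]
      ring

lemma sum_range_even_odd' (f : ℕ → ℚ) (m : ℕ) :
    ∑ i ∈ range (2*m+1), f i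
      = ∑ j ∈ range (m+1), f (2*j) + ∑ j ∈ range m, f (2*j+1) := by
  rw [sum_range_succ, sum_range_even_odd, sum_range_succ]
  ring

-- parity split at odd index: C_{2m+2} = 2 * Σ_{j≤m} C_{2j} C_{2(m-j)+1}
lemma conv_even (m : ℕ) :
    (catalan (2*m+2) : ℚ)
      = 2 * ∑ j ∈ range (m+1), (catalan (2*j) : ℚ) * catalan (2*(m-j)+1) := by
  have h := catalan_succ_range (2*m+1)
  have hc : ((catalan (2*m+2) : ℕ) : ℚ)
      = ∑ i ∈ range (2*(m+1)), (catalan i : ℚ) * catalan (2*m+1-i) := by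
    rw [show 2*(m+1) = 2*m+1+1 by ring, h]
    push_cast
    rfl
  rw [hc, sum_range_even_odd]
  have h1 : ∑ j ∈ range (m+1), (catalan (2*j) : ℚ) * catalan (2*m+1-2*j)
      = ∑ j ∈ range (m+1), (catalan (2*j) : ℚ) * catalan (2*(m-j)+1) := by
    apply Finset.sum_congr rfl
    intro j hj
    rw [Finset.mem_range] at hj
    rw [show 2*m+1-2*j = 2*(m-j)+1 from by omega]
  have h2 : ∑ j ∈ range (m+1), (catalan (2*j+1) : ℚ) * catalan (2*m+1-(2*j+1))
      = ∑ j ∈ range (m+1), (catalan (2*j) : ℚ) * catalan (2*(m-j)+1) := by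
    rw [← Finset.sum_range_reflect]
    apply Finset.sum_congr rfl
    intro j hj
    rw [Finset.mem_range] at hj
    rw [show 2*(m+1-1-j)+1 = 2*(m-j)+1 by omega,
      show 2*m+1-(2*(m-j)+1) = 2*j by omega]
    ring
  rw [h1, h2]
  ring

-- parity split at even index: C_{2m+1} = Σ_{j≤m} C_{2j}C_{2(m-j)} + Σ_{j<m} C_{2j+1}C_{2(m-1-j)+1}
lemma conv_odd (m : ℕ) :
    (catalan (2*m+1) : ℚ)
      = ∑ j ∈ range (m+1), (catalan (2*j) : ℚ) * catalan (2*(m-j))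
        + ∑ j ∈ range m, (catalan (2*j+1) : ℚ) * catalan (2*(m-1-j)+1) := by
  have h := catalan_succ_range (2*m)
  have hc : ((catalan (2*m+1) : ℕ) : ℚ)
      = ∑ i ∈ range (2*m+1), (catalan i : ℚ) * catalan (2*m-i) := by
    rw [h]; push_cast; rfl
  rw [hc, sum_range_even_odd']
  congr 1
  · apply Finset.sum_congr rfl
    intro j hj
    rw [Finset.mem_range] at hj
    rw [show 2*m-2*j = 2*(m-j) from by omega]
  · apply Finset.sum_congr rfl
    intro j hj
    rw [Finset.mem_range] at hj
    rw [show 2*m-(2*j+1) = 2*(m-1-j)+1 from by omega]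

lemma catalan_rec (n : ℕ) : (n+2) * catalan (n+1) = 2*(2*n+1) * catalan n := by
  have h1 := succ_mul_catalan_eq_centralBinom (n+1)
  have h2 := Nat.succ_mul_centralBinom_succ n
  have h3 := succ_mul_catalan_eq_centralBinom n
  have : (n+1) * ((n+2) * catalan (n+1)) = (n+1) * (2*(2*n+1) * catalan n) := by
    calc (n+1) * ((n+2) * catalan (n+1)) = (n+1) * ((n+1+1) * catalan (n+1)) := by ring_nf
    _ = (n+1) * (n+1).centralBinom := by rw [h1]
    _ = 2*(2*n+1) * n.centralBinom := h2
    _ = 2*(2*n+1) * ((n+1) * catalan n) := by rw [h3]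
    _ = (n+1) * (2*(2*n+1) * catalan n) := by ring
  exact Nat.eq_of_mul_eq_mul_left (Nat.succ_pos n) this

lemma catalan_pos' (n : ℕ) : 0 < catalan n := by
  have h3 := succ_mul_catalan_eq_centralBinom n
  have h := Nat.centralBinom_pos n
  rcases Nat.eq_zero_or_pos (catalan n) with h0 | h0
  · rw [h0, mul_zero] at h3; omega
  · exact h0

lemma key_ineq (m : ℕ) (hm : 2 ≤ m) : 21 * 4^m * catalan m ≤ 16 * catalan (2*m+1) := by
  induction m, hm using Nat.le_induction with
  | base =>
      norm_num [catalan_two, show catalan 5 = 42 by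
        rw [show (5:ℕ) = 4+1 from rfl, catalan_succ]
        simp [Fin.sum_univ_succ, catalan_two, catalan_three,
          show catalan 4 = 14 by
            rw [show (4:ℕ) = 3+1 from rfl, catalan_succ]
            simp [Fin.sum_univ_succ, catalan_two, catalan_three]]]
  | succ m hm ih =>
      have K : 0 < (m+2)*(2*m+3)*(2*m+4) := by positivity
      apply Nat.le_of_mul_le_mul_left _ K
      have r1 := catalan_rec m
      have r2 := catalan_rec (2*m+1)
      have r3 := catalan_rec (2*m+2)
      calc (m+2)*(2*m+3)*(2*m+4) * (21 * 4^(m+1) * catalan (m+1))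
          = 21*4^(m+1)*(2*m+3)*(2*m+4)*((m+2)*catalan (m+1)) := by ring
        _ = 21*4^(m+1)*(2*m+3)*(2*m+4)*(2*(2*m+1)*catalan m) := by rw [r1]
        _ = (8*(2*m+1)*(2*m+3)*(2*m+4)) * (21 * 4^m * catalan m) := by ring
        _ ≤ (8*(2*m+1)*(2*m+3)*(2*m+4)) * (16 * catalan (2*m+1)) := Nat.mul_le_mul_left _ ih
        _ = (256*(2*m+1)*(2*m+3)*(m+2)) * catalan (2*m+1) := by ring
        _ ≤ (64*(m+2)*(4*m+5)*(4*m+3)) * catalan (2*m+1) := by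
            apply Nat.mul_le_mul_right
            nlinarith
        _ = (32*(m+2)*(4*m+5)) * (2*(2*(2*m+1)+1) * catalan (2*m+1)) := by ring
        _ = (32*(m+2)*(4*m+5)) * ((2*m+1+2) * catalan (2*m+1+1)) := by rw [r2]
        _ = (16*(m+2)*(2*m+3)) * (2*(2*(2*m+2)+1) * catalan (2*m+2)) := by ring
        _ = (16*(m+2)*(2*m+3)) * ((2*m+2+2) * catalan (2*m+2+1)) := by rw [r3]
        _ = (m+2)*(2*m+3)*(2*m+4) * (16 * catalan (2*(m+1)+1)) := by
            rw [show 2*(m+1)+1 = 2*m+2+1 by ring]; ring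

noncomputable def eS : PowerSeries ℚ := PowerSeries.mk fun m => (catalan (2*m) : ℚ)
noncomputable def oS : PowerSeries ℚ := PowerSeries.mk fun m => (catalan (2*m+1) : ℚ)
noncomputable def cS : PowerSeries ℚ := PowerSeries.mk fun m => (4^m * catalan m : ℚ)

example (n : ℕ) (f g : PowerSeries ℚ) :
    (PowerSeries.coeff (R := ℚ) n) (f*g) = ∑ k ∈ range (n+1), (coeff (R := ℚ) k f) * (coeff (R := ℚ) (n-k) g) := by
  rw [PowerSeries.coeff_mul, Finset.Nat.sum_antidiagonal_eq_sum_range_succ_mk]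



-- placeholders for previously proven lemmas

lemma PS1 : eS = 1 + X * (2 * eS * oS) := by
  ext n
  cases n with
  | zero => simp [eS, PowerSeries.coeff_one]
  | succ n =>
      rw [map_add, PowerSeries.coeff_one, PowerSeries.coeff_succ_X_mul]
      simp only [if_neg (Nat.succ_ne_zero n), zero_add]
      rw [show (2 * eS * oS) = eS*oS + eS*oS by ring, map_add,
        PowerSeries.coeff_mul, Finset.Nat.sum_antidiagonal_eq_sum_range_succ_mk]
      simp only [eS, oS, coeff_mk]
      rw [show 2*(n+1) = 2*n+2 by ring, conv_even n]
      ring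

lemma PS2 : oS = eS * eS + X * (oS * oS) := by
  ext n
  cases n with
  | zero =>
      simp [eS, oS, PowerSeries.coeff_zero_eq_constantCoeff, map_add, map_mul]
  | succ n =>
      rw [map_add, PowerSeries.coeff_succ_X_mul, PowerSeries.coeff_mul,
        PowerSeries.coeff_mul, Finset.Nat.sum_antidiagonal_eq_sum_range_succ_mk,
        Finset.Nat.sum_antidiagonal_eq_sum_range_succ_mk]
      simp only [eS, oS, coeff_mk]
      rw [show 2*(n+1)+1 = 2*(n+1)+1 from rfl, conv_odd (n+1)]
      norm_num


lemma constCoeff_ne (f : PowerSeries ℚ) (h : constantCoeff (R := ℚ) f = 1) : f ≠ 0 := by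
  intro h0; rw [h0] at h; simp at h

lemma PS3 : oS * (eS + 1) = 2 * eS^3 := by
  have hA : eS - 1 - X * (2 * eS * oS) = 0 := by linear_combination PS1
  have hB : oS - eS * eS - X * (oS * oS) = 0 := by linear_combination PS2
  have key : (oS * (eS + 1) - 2 * eS^3) * (1 - X * oS) = 0 := by
    linear_combination (eS + 1) * hB - eS^2 * hA
  have hne : (1 - X * oS : PowerSeries ℚ) ≠ 0 := by
    apply constCoeff_ne
    simp [map_sub, map_mul]
  rcases mul_eq_zero.mp key with h | h
  · linear_combination h
  · exact absurd h hne

lemma PS4 : eS * eS = 1 + X * (4 * (eS*eS) * (eS*eS)) := by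
  have hA : eS - 1 - X * (2 * eS * oS) = 0 := by linear_combination PS1
  have hP : oS * (eS + 1) - 2 * eS^3 = 0 := by rw [PS3]; ring
  linear_combination (eS + 1) * hA + 2 * X * eS * hP

lemma PS5 : cS = 1 + X * (4 * cS * cS) := by
  ext n
  cases n with
  | zero => simp [cS, PowerSeries.coeff_one]
  | succ n =>
      rw [map_add, PowerSeries.coeff_one, PowerSeries.coeff_succ_X_mul]
      simp only [if_neg (Nat.succ_ne_zero n), zero_add]
      rw [show (4 * cS * cS) = cS*cS + cS*cS + cS*cS + cS*cS by ring, map_add, map_add, map_add,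
        PowerSeries.coeff_mul, Finset.Nat.sum_antidiagonal_eq_sum_range_succ_mk]
      simp only [cS, coeff_mk]
      have hcat : (catalan (n+1) : ℚ) = ∑ k ∈ range (n+1), (catalan k : ℚ) * catalan (n-k) := by
        rw [catalan_succ_range]; push_cast; rfl
      have : ∑ k ∈ range (n+1), (4^k * (catalan k:ℚ)) * (4^(n-k) * (catalan (n-k):ℚ))
          = 4^n * ∑ k ∈ range (n+1), (catalan k : ℚ) * catalan (n-k) := by
        rw [Finset.mul_sum]
        apply Finset.sum_congr rfl
        intro k hk; rw [Finset.mem_range] at hk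
        rw [show (4:ℚ)^k * (catalan k:ℚ) * ((4:ℚ)^(n-k) * (catalan (n-k):ℚ))
            = (4:ℚ)^k * (4:ℚ)^(n-k) * ((catalan k:ℚ) * catalan (n-k)) by ring,
          ← pow_add, show k + (n-k) = n from by omega]
      rw [this, ← hcat]
      push_cast
      ring

lemma PS6 : eS * eS = cS := by
  have h4 : eS*eS - 1 - X * (4 * (eS*eS) * (eS*eS)) = 0 := by linear_combination PS4
  have h5 : cS - 1 - X * (4 * cS * cS) = 0 := by linear_combination PS5
  have key : (eS*eS - cS) * (1 - X * (4 * (eS*eS + cS))) = 0 := by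
    linear_combination h4 - h5
  have hne : (1 - X * (4 * (eS*eS + cS)) : PowerSeries ℚ) ≠ 0 := by
    apply constCoeff_ne
    simp [map_sub, map_mul]
  rcases mul_eq_zero.mp key with h | h
  · exact sub_eq_zero.mp h
  · exact absurd h hne

lemma shapiro (m : ℕ) :
    ∑ j ∈ range (m+1), (catalan (2*j) : ℚ) * catalan (2*(m-j)) = 4^m * catalan m := by
  have := congrArg (PowerSeries.coeff (R := ℚ) m) PS6
  rw [PowerSeries.coeff_mul, Finset.Nat.sum_antidiagonal_eq_sum_range_succ_mk] at this
  simp only [eS, cS, coeff_mk] at this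
  exact this

lemma filter_even_sum (f : ℕ → ℚ) (m : ℕ) :
    ∑ ℓ ∈ (range (2*m+1)).filter (fun ℓ => Even ℓ), f ℓ = ∑ j ∈ range (m+1), f (2*j) := by
  induction m with
  | zero => norm_num [Finset.filter_singleton]
  | succ m ih =>
      have h1 : (range (2*(m+1)+1)).filter (fun ℓ => Even ℓ)
          = insert (2*m+2) ((range (2*m+1)).filter (fun ℓ => Even ℓ)) := by
        rw [show 2*(m+1)+1 = (2*m+2)+1 by ring, Finset.range_add_one, Finset.filter_insert,
          if_pos (by rw [Nat.even_iff]; omega : Even (2*m+2)),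
          show 2*m+2 = (2*m+1)+1 from rfl, Finset.range_add_one, Finset.filter_insert,
          if_neg (by rw [Nat.even_iff]; omega : ¬ Even (2*m+1))]
      rw [h1, Finset.sum_insert (by simp), ih,
        Finset.sum_range_succ (f := fun j => f (2*j)) (n := m+1),
        show 2*(m+1) = 2*m+2 by ring]
      ring

lemma filter_even_sum' (f : ℕ → ℚ) (m : ℕ) :
    ∑ ℓ ∈ (range (2*m+2)).filter (fun ℓ => Even ℓ), f ℓ = ∑ j ∈ range (m+1), f (2*j) := by
  rw [show 2*m+2 = (2*m+1)+1 from rfl, Finset.range_add_one, Finset.filter_insert,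
    if_neg (by rw [Nat.even_iff]; omega : ¬ Even (2*m+1)), filter_even_sum]

lemma catalan_four : catalan 4 = 14 := by
  rw [show (4:ℕ) = 3+1 from rfl, catalan_succ]
  simp [Fin.sum_univ_succ, catalan_two, catalan_three]

lemma catalan_five : catalan 5 = 42 := by
  rw [show (5:ℕ) = 4+1 from rfl, catalan_succ]
  simp [Fin.sum_univ_succ, catalan_two, catalan_three, catalan_four]

lemma even_value (m : ℕ) :
    catalanEvenPart (2*m) = (4^m * (catalan m : ℚ)) / (catalan (2*m+1) : ℚ) := by
  unfold catalanEvenPart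
  rw [filter_even_sum (fun ℓ => (catalan (2*m - ℓ):ℚ) * catalan ℓ) m]
  have h : ∑ j ∈ range (m+1), (catalan (2*m - 2*j):ℚ) * catalan (2*j)
      = ∑ j ∈ range (m+1), (catalan (2*j):ℚ) * catalan (2*(m-j)) := by
    apply Finset.sum_congr rfl; intro j hj; rw [Finset.mem_range] at hj
    rw [show 2*m - 2*j = 2*(m-j) from by omega]; ring
  rw [h, shapiro]

lemma odd_value (m : ℕ) : catalanEvenPart (2*m+1) = 1/2 := by
  unfold catalanEvenPart
  rw [show 2*m+1+1 = 2*m+2 from rfl,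
    filter_even_sum' (fun ℓ => (catalan (2*m+1 - ℓ):ℚ) * catalan ℓ) m]
  have h : ∑ j ∈ range (m+1), (catalan (2*m+1 - 2*j):ℚ) * catalan (2*j)
      = ∑ j ∈ range (m+1), (catalan (2*j):ℚ) * catalan (2*(m-j)+1) := by
    apply Finset.sum_congr rfl; intro j hj; rw [Finset.mem_range] at hj
    rw [show 2*m+1 - 2*j = 2*(m-j)+1 from by omega]; ring
  have hC : (catalan (2*m+2) : ℚ) ≠ 0 := by
    exact_mod_cast (catalan_pos' (2*m+2)).ne'
  rw [h, show ∑ j ∈ range (m+1), (catalan (2*j):ℚ) * catalan (2*(m-j)+1)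
      = (catalan (2*m+2) : ℚ) / 2 from by rw [conv_even m]; ring]
  field_simp

lemma E4_value : catalanEvenPart 4 = 16/21 := by
  rw [show (4:ℕ) = 2*2 from rfl, even_value]
  norm_num [catalan_two, catalan_five]

/-- For all n ≥ 4, E(n) ≤ E(4). -/
theorem catalanEvenPart_le (n : ℕ) (hn : 4 ≤ n) :
    catalanEvenPart n ≤ catalanEvenPart 4 := by
  rw [E4_value]
  rcases Nat.even_or_odd n with ⟨m, hm⟩ | ⟨m, hm⟩
  · have hm2 : 2 ≤ m := by omega
    rw [hm, show m + m = 2*m from by ring, even_value]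
    have hpos : (0:ℚ) < catalan (2*m+1) := by exact_mod_cast catalan_pos' (2*m+1)
    rw [div_le_div_iff₀ hpos (by norm_num : (0:ℚ) < 21)]
    have h := key_ineq m hm2
    have h' : (21 * 4^m * catalan m : ℚ) ≤ 16 * catalan (2*m+1) := by exact_mod_cast h
    linarith
  · rw [hm, odd_value]
    norm_num
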